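/- Let α, β ∈ [0,1] and let values v_i be additive. Suppose a (possibly partial) allocation X = (X_1,...,X_n) is α-EFkX, and suppose during a completion process every agent's value never decreases and whenever a good g is added to a bundle B held by agent j', agent j' was unenvied by agent i (v_i(current bundle of i) ≥ v_i(B)) and g is not β-critical for i (v_i(g) ≤ β · v_i(X_i)). Then in the final allocation X̃, for every pair of agents i ≠ j: if X̃_j received at least one pool good with last such good g, then v_i(X̃_j) ≤ (1+β) · v_i(X̃_i); hence the final allocation is min{α, 1/(1+β)}-EFkX. -/
import Mathlib


open Finset

/-- An allocation `X` is `α`-EFkX: for all distinct agents `i j` and every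
`Y ⊆ X j` with `|Y| = k`, `v i (X i) ≥ α · v i (X j \ Y)`. -/
def isEFkX {ι G : Type*} [DecidableEq G] (v : ι → G → ℝ) (X : ι → Finset G)
    (k : ℕ) (α : ℝ) : Prop :=
  ∀ i j, i ≠ j → ∀ Y ⊆ X j, Y.card = k →
    α * ∑ g ∈ X j \ Y, v i g ≤ ∑ g ∈ X i, v i g

/-- the Partial-to-Full-Allocation (P2FA) lemma. -/
theorem stmt2 {ι G : Type*} [DecidableEq G] (k : ℕ) (α β : ℝ)
    (hα0 : 0 ≤ α) (hα1 : α ≤ 1) (hβ0 : 0 ≤ β) (hβ1 : β ≤ 1)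
    (v : ι → G → ℝ) (hv : ∀ i g, 0 ≤ v i g)
    (X Xt : ι → Finset G)
    (hEF : isEFkX v X k α)
    (hmono : ∀ i, ∑ g ∈ X i, v i g ≤ ∑ g ∈ Xt i, v i g)
    (hcases : ∀ i j, i ≠ j →
      (∃ j', Xt j = X j') ∨
      (∃ g ∈ Xt j, ∃ t : ℝ,
        (∑ g' ∈ (Xt j).erase g, v i g') ≤ t ∧ t ≤ ∑ g' ∈ Xt i, v i g' ∧
        v i g ≤ β * ∑ g' ∈ X i, v i g')) :
    (∀ i j, i ≠ j → ∀ g ∈ Xt j, ∀ t : ℝ,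
        (∑ g' ∈ (Xt j).erase g, v i g') ≤ t → t ≤ ∑ g' ∈ Xt i, v i g' →
        v i g ≤ β * ∑ g' ∈ X i, v i g' →
        ∑ g' ∈ Xt j, v i g' ≤ (1 + β) * ∑ g' ∈ Xt i, v i g') ∧
    isEFkX v Xt k (min α (1 / (1 + β))) := by

  have hsum_nonneg : ∀ (i : ι) (S : Finset G), 0 ≤ ∑ g ∈ S, v i g :=
    fun i S => Finset.sum_nonneg fun g _ => hv i g
  have key : ∀ i j, i ≠ j → ∀ g ∈ Xt j, ∀ t : ℝ,
      (∑ g' ∈ (Xt j).erase g, v i g') ≤ t → t ≤ ∑ g' ∈ Xt i, v i g' →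
      v i g ≤ β * ∑ g' ∈ X i, v i g' →
      ∑ g' ∈ Xt j, v i g' ≤ (1 + β) * ∑ g' ∈ Xt i, v i g' := by
    intro i j hij g hg t h1 h2 h3
    have hsplit : ∑ g' ∈ Xt j, v i g' = v i g + ∑ g' ∈ (Xt j).erase g, v i g' :=
      (Finset.add_sum_erase _ _ hg).symm
    have hXi : β * ∑ g' ∈ X i, v i g' ≤ β * ∑ g' ∈ Xt i, v i g' :=
      mul_le_mul_of_nonneg_left (hmono i) hβ0
    calc ∑ g' ∈ Xt j, v i g' = v i g + ∑ g' ∈ (Xt j).erase g, v i g' := hsplit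
      _ ≤ (β * ∑ g' ∈ Xt i, v i g') + ∑ g' ∈ Xt i, v i g' :=
          add_le_add (h3.trans hXi) (h1.trans h2)
      _ = (1 + β) * ∑ g' ∈ Xt i, v i g' := by ring
  refine ⟨key, ?_⟩
  intro i j hij Y hY hcard
  have h1β : (1:ℝ) ≤ 1 + β := by linarith
  have h1βpos : (0:ℝ) < 1 + β := by linarith
  have hsub : ∑ g ∈ Xt j \ Y, v i g ≤ ∑ g ∈ Xt j, v i g :=
    Finset.sum_le_sum_of_subset_of_nonneg (Finset.sdiff_subset) (fun g _ _ => hv i g)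
  rcases hcases i j hij with ⟨j', hj'⟩ | ⟨g, hg, t, h1, h2, h3⟩
  · by_cases hji : j' = i
    · rw [hji] at hj'
      have : ∑ g ∈ Xt j \ Y, v i g ≤ ∑ g ∈ Xt i, v i g := by
        rw [hj'] at hsub ⊢
        exact hsub.trans (hmono i)
      calc min α (1 / (1 + β)) * ∑ g ∈ Xt j \ Y, v i g
          ≤ 1 * ∑ g ∈ Xt j \ Y, v i g := by
            apply mul_le_mul_of_nonneg_right _ (hsum_nonneg i _)
            exact le_trans (min_le_left _ _) hα1
        _ = ∑ g ∈ Xt j \ Y, v i g := one_mul _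
        _ ≤ ∑ g ∈ Xt i, v i g := this
    · have hEFij : α * ∑ g ∈ X j' \ Y, v i g ≤ ∑ g ∈ X i, v i g := by
        apply hEF i j' (Ne.symm hji) Y _ hcard
        rw [← hj']; exact hY
      calc min α (1 / (1 + β)) * ∑ g ∈ Xt j \ Y, v i g
          ≤ α * ∑ g ∈ Xt j \ Y, v i g :=
            mul_le_mul_of_nonneg_right (min_le_left _ _) (hsum_nonneg i _)
        _ = α * ∑ g ∈ X j' \ Y, v i g := by rw [hj']
        _ ≤ ∑ g ∈ X i, v i g := hEFij
        _ ≤ ∑ g ∈ Xt i, v i g := hmono i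
  · have hkey := key i j hij g hg t h1 h2 h3
    have : ∑ g ∈ Xt j \ Y, v i g ≤ (1 + β) * ∑ g ∈ Xt i, v i g := hsub.trans hkey
    calc min α (1 / (1 + β)) * ∑ g ∈ Xt j \ Y, v i g
        ≤ (1 / (1 + β)) * ∑ g ∈ Xt j \ Y, v i g :=
          mul_le_mul_of_nonneg_right (min_le_right _ _) (hsum_nonneg i _)
      _ ≤ (1 / (1 + β)) * ((1 + β) * ∑ g ∈ Xt i, v i g) :=
          mul_le_mul_of_nonneg_left this (by positivity)
      _ = ∑ g ∈ Xt i, v i g := by field_simp
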